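/- Let G be a connected graph, {F₁,...,F_r} a partition of E(G) satisfying the distance decomposition d_G(u,v) = Σᵢ d_{G/Fᵢ}(ℓᵢ(u),ℓᵢ(v)) for all u,v. Then the degree distance satisfies DD(G) = Σ_{i=1}^r W(G/Fᵢ, aᵢ, bᵢ), where for each component C of G ∖ Fᵢ, aᵢ(C) = Σ_{x∈C} deg_G(x) and bᵢ(C) = |V(C)|. -/

import Mathlib

open Finset
open scoped Classical

noncomputable section

variable {V : Type*}

noncomputable instance fintypeCC [Fintype V] (G : SimpleGraph V) : Fintype G.ConnectedComponent :=
  @Fintype.ofFinite _ (Finite.of_surjective G.connectedComponentMk fun C => C.exists_rep)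

noncomputable def SimpleGraph.wienerDW [Fintype V] (G : SimpleGraph V) (a b : V → ℝ) : ℝ :=
  (1 / 2) * ∑ u : V, ∑ v : V, (a u * b v + a v * b u) * (G.dist u v : ℝ)

/-- The degree of a vertex (as a real number). -/
noncomputable def SimpleGraph.degR (G : SimpleGraph V) (u : V) : ℝ :=
  Nat.card {w : V | G.Adj u w}

/-- The degree distance `DD(G) = ∑_{{u,v}⊆V(G)} (deg(u)+deg(v)) d(u,v)`. -/
noncomputable def SimpleGraph.degreeDistance [Fintype V] (G : SimpleGraph V) : ℝ :=
  (1 / 2) * ∑ u : V, ∑ v : V, (G.degR u + G.degR v) * (G.dist u v : ℝ)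

def SimpleGraph.quotientGraph (G : SimpleGraph V) (F : Set (Sym2 V)) :
    SimpleGraph (G.deleteEdges F).ConnectedComponent where
  Adj C D := C ≠ D ∧ ∃ u v : V, G.Adj u v ∧
    (G.deleteEdges F).connectedComponentMk u = C ∧ (G.deleteEdges F).connectedComponentMk v = D
  symm := by
    constructor
    rintro C D ⟨hne, u, v, h, hu, hv⟩
    exact ⟨hne.symm, v, u, h.symm, hv, hu⟩
  loopless := by constructor; rintro C ⟨hne, -⟩; exact hne rfl


private lemma collapse_aux {α β : Type*} [Fintype α] [Fintype β] [DecidableEq β]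
    (ℓ : α → β) (g : α → ℝ) (f : β → ℝ) :
    ∑ C : β, (∑ x : α, if ℓ x = C then g x else 0) * f C = ∑ x : α, g x * f (ℓ x) := by
  simp_rw [Finset.sum_mul, ite_mul, zero_mul]
  rw [Finset.sum_comm]
  simp [Finset.sum_ite_eq]

/-- If `G` is connected and `{F₁,…,F_r}` is a partition of `E(G)` satisfying the
distance decomposition, then `DD(G) = ∑ᵢ W(G/Fᵢ, aᵢ, bᵢ)` where, for a component `C` of `G∖Fᵢ`,
`aᵢ(C)` is the sum of the degrees (in `G`) of the vertices of `C` and `bᵢ(C) = |V(C)|`. -/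
theorem degreeDistance_eq_sum_quotients [Fintype V] (G : SimpleGraph V) (hG : G.Connected)
    (r : ℕ) (F : Fin r → Set (Sym2 V))
    (hsub : ∀ i, F i ⊆ G.edgeSet)
    (hdisj : ∀ i j, i ≠ j → Disjoint (F i) (F j))
    (hcover : ∀ e ∈ G.edgeSet, ∃ i, e ∈ F i)
    (hdist : ∀ u v : V, G.dist u v =
      ∑ i, (G.quotientGraph (F i)).dist
        ((G.deleteEdges (F i)).connectedComponentMk u)
        ((G.deleteEdges (F i)).connectedComponentMk v)) :
    G.degreeDistance = ∑ i, (G.quotientGraph (F i)).wienerDW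
      (fun C => ∑ x : V, if (G.deleteEdges (F i)).connectedComponentMk x = C then G.degR x else 0)
      (fun C => ∑ x : V, if (G.deleteEdges (F i)).connectedComponentMk x = C then (1 : ℝ) else 0) := by
  have key : ∀ i : Fin r,
      (G.quotientGraph (F i)).wienerDW
        (fun C => ∑ x : V, if (G.deleteEdges (F i)).connectedComponentMk x = C then G.degR x else 0)
        (fun C => ∑ x : V, if (G.deleteEdges (F i)).connectedComponentMk x = C then (1 : ℝ) else 0)
      = (1 / 2) * ∑ u : V, ∑ v : V, (G.degR u + G.degR v) *
          ((G.quotientGraph (F i)).dist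
            ((G.deleteEdges (F i)).connectedComponentMk u)
            ((G.deleteEdges (F i)).connectedComponentMk v) : ℝ) := by
    intro i
    set ℓ : V → (G.deleteEdges (F i)).ConnectedComponent :=
      (G.deleteEdges (F i)).connectedComponentMk with hℓ
    set d : (G.deleteEdges (F i)).ConnectedComponent →
        (G.deleteEdges (F i)).ConnectedComponent → ℝ :=
      fun C D => ((G.quotientGraph (F i)).dist C D : ℝ) with hd
    unfold SimpleGraph.wienerDW
    congr 1
    have step : ∀ C, ∑ D, ((∑ x : V, if ℓ x = C then G.degR x else 0) *
          (∑ x : V, if ℓ x = D then (1:ℝ) else 0) +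
          (∑ x : V, if ℓ x = D then G.degR x else 0) *
          (∑ x : V, if ℓ x = C then (1:ℝ) else 0)) * d C D
        = (∑ x : V, if ℓ x = C then G.degR x else 0) * (∑ y : V, d C (ℓ y)) +
          (∑ x : V, if ℓ x = C then (1:ℝ) else 0) * (∑ y : V, G.degR y * d C (ℓ y)) := by
      intro C
      have h1 : ∑ D, (∑ x : V, if ℓ x = D then (1:ℝ) else 0) * d C D = ∑ y : V, d C (ℓ y) := by
        rw [collapse_aux ℓ (fun _ => (1:ℝ)) (fun D => d C D)]; simp
      have h2 : ∑ D, (∑ x : V, if ℓ x = D then G.degR x else 0) * d C D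
          = ∑ y : V, G.degR y * d C (ℓ y) :=
        collapse_aux ℓ (fun y => G.degR y) (fun D => d C D)
      rw [← h1, ← h2, Finset.mul_sum, Finset.mul_sum, ← Finset.sum_add_distrib]
      exact Finset.sum_congr rfl fun D _ => by ring
    calc ∑ C, ∑ D, ((∑ x : V, if ℓ x = C then G.degR x else 0) *
            (∑ x : V, if ℓ x = D then (1:ℝ) else 0) +
            (∑ x : V, if ℓ x = D then G.degR x else 0) *
            (∑ x : V, if ℓ x = C then (1:ℝ) else 0)) * d C D
        = ∑ C, ((∑ x : V, if ℓ x = C then G.degR x else 0) * (∑ y : V, d C (ℓ y)) +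
            (∑ x : V, if ℓ x = C then (1:ℝ) else 0) * (∑ y : V, G.degR y * d C (ℓ y))) := by
          exact Finset.sum_congr rfl fun C _ => step C
      _ = (∑ x : V, G.degR x * (∑ y : V, d (ℓ x) (ℓ y))) +
          (∑ x : V, (1:ℝ) * (∑ y : V, G.degR y * d (ℓ x) (ℓ y))) := by
          rw [Finset.sum_add_distrib,
            collapse_aux ℓ (fun x => G.degR x) (fun C => ∑ y : V, d C (ℓ y)),
            collapse_aux ℓ (fun _ => (1:ℝ)) (fun C => ∑ y : V, G.degR y * d C (ℓ y))]
      _ = ∑ u : V, ∑ v : V, (G.degR u + G.degR v) * d (ℓ u) (ℓ v) := by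
          rw [← Finset.sum_add_distrib]
          refine Finset.sum_congr rfl fun u _ => ?_
          rw [Finset.mul_sum, one_mul, ← Finset.sum_add_distrib]
          refine Finset.sum_congr rfl fun v _ => ?_
          ring
  rw [Finset.sum_congr rfl fun i _ => key i]
  unfold SimpleGraph.degreeDistance
  rw [← Finset.mul_sum]
  congr 1
  conv_rhs => rw [Finset.sum_comm]
  refine Finset.sum_congr rfl fun u _ => ?_
  conv_rhs => rw [Finset.sum_comm]
  refine Finset.sum_congr rfl fun v _ => ?_
  rw [hdist u v, Nat.cast_sum, Finset.mul_sum]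

end
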